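/- Let R be a subring of a commutative ring T with a common ideal C containing a T-regular element, with R ≠ T, and assume T is flat as an R-module. Then C is not finitely generated as an ideal of R. -/

import Mathlib

universe u

private lemma flat_rel_aux {R M : Type u} [CommRing R] [AddCommGroup M] [Module R M]
    [Module.Flat R M] (f : Fin 2 → R) (x : Fin 2 → M)
    (h : f 0 • x 0 + f 1 • x 1 = 0) :
    ∃ (κ : Type u) (_ : Fintype κ) (a : Fin 2 → κ → R) (y : κ → M),
      (∀ i, x i = ∑ j, a i j • y j) ∧ ∀ j, f 0 * a 0 j + f 1 * a 1 j = 0 := by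
  have h' : ∑ i : ULift.{u} (Fin 2), f i.down • x i.down = 0 := by
    rw [Fintype.sum_equiv Equiv.ulift (fun i => f i.down • x i.down)
      (fun i => f i • x i) (fun _ => rfl), Fin.sum_univ_two, h]
  obtain ⟨κ, a, y, hxy, hrel⟩ := Module.Flat.isTrivialRelation_of_sum_smul_eq_zero h'
  refine ⟨ULift.{u} (Fin κ), inferInstance, fun i j => a ⟨i⟩ j.down, fun j => y j.down,
    fun i => ?_, fun ⟨j⟩ => ?_⟩
  · exact (hxy ⟨i⟩).trans (Fintype.sum_equiv Equiv.ulift _ _ (fun _ => rfl)).symm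
  have h2 := hrel j
  have h3 : ∑ i : Fin 2, f i * a ⟨i⟩ j = 0 := by
    rw [← Fintype.sum_equiv Equiv.ulift (fun i : ULift.{u} (Fin 2) => f i.down * a i j)
      (fun i : Fin 2 => f i * a ⟨i⟩ j) (fun _ => rfl)]
    exact h2
  rw [Fin.sum_univ_two] at h3
  exact h3

set_option synthInstance.maxHeartbeats 1000000 in
set_option maxHeartbeats 1000000 in
/-- in a non-trivial (`R ≠ T`) regular conductor situation with `T`
flat over `R`, the conductor `C` is not finitely generated as an ideal of `R`. -/
theorem stmt_10 (T : Type*) [CommRing T] (R : Subring T) (hRT : R ≠ ⊤) (C : Ideal T)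
    (hCR : (C : Set T) ⊆ (R : Set T))
    (hreg : ∃ c ∈ C, c ∈ nonZeroDivisors T)
    (hflat : Module.Flat ↥R T) :
    ¬ (Ideal.comap (algebraMap ↥R T) C).FG := by
  intro hfg
  obtain ⟨c, hcC, hcreg⟩ := hreg
  -- the conductor as an `R`-submodule of `T`
  set N : Submodule ↥R T :=
    Submodule.map (Algebra.linearMap ↥R T) (Ideal.comap (algebraMap ↥R T) C) with hN
  have hNmem : ∀ x : T, x ∈ N ↔ x ∈ C := by
    intro x
    constructor
    · rintro ⟨r, hr, rfl⟩; exact hr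
    · intro hx; exact ⟨⟨x, hCR hx⟩, hx, rfl⟩
  have hNfg : N.FG := Submodule.FG.map _ hfg
  have hcN : c ∈ N := (hNmem c).2 hcC
  have hstab : ∀ (x : T), ∀ n ∈ N, x • n ∈ N := by
    intro x n hn
    rw [smul_eq_mul]
    exact (hNmem _).2 (C.mul_mem_left x ((hNmem n).1 hn))
  -- T is integral over R, via the finitely generated faithful module N
  haveI : Module.Finite ↥R N := ⟨(Submodule.fg_top N).2 hNfg⟩
  let f : T →ₐ[↥R] Module.End ↥R N :=
    AlgHom.ofLinearMap
      { toFun := fun x => (DistribMulAction.toLinearMap ↥R T x).restrict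
          (fun n hn => hstab x n hn)
        map_add' := by intro x y; ext n; exact add_smul x y n.1
        map_smul' := by intro r s; ext n; exact smul_assoc r s n.1 }
      (by ext n; exact one_smul T n.1)
      (by intro x y; ext n; exact mul_smul x y n.1)
  have hfinj : Function.Injective f := by
    intro a b hab
    have h1 : a * c = b * c := congrArg Subtype.val (DFunLike.congr_fun hab (⟨c, hcN⟩ : N))
    exact (mul_cancel_right_mem_nonZeroDivisors hcreg).1 h1
  have hint : (algebraMap ↥R T).IsIntegral := by
    intro t
    have e := isIntegral_algHom_iff (R := ↥R) (A := T) (B := Module.End ↥R ↥N) f hfinj (x := t)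
    exact e.mp (Algebra.IsIntegral.isIntegral (R := ↥R) (f t))
  have hker : RingHom.ker (algebraMap ↥R T) = ⊥ :=
    (RingHom.injective_iff_ker_eq_bot _).1 Subtype.val_injective
  -- now show R = ⊤
  apply hRT
  rw [eq_top_iff]
  intro t _
  have hct : c * t ∈ C := C.mul_mem_right t hcC
  set c' : ↥R := ⟨c, hCR hcC⟩ with hc'
  set r : ↥R := ⟨c * t, hCR hct⟩ with hr
  haveI := hflat
  obtain ⟨κ, hκ, a, y, hxy, hrel2⟩ := flat_rel_aux ![c', -r] ![t, 1] (by
    show c' • t + (-r) • (1 : T) = 0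
    rw [Subring.smul_def, Subring.smul_def, smul_eq_mul, smul_eq_mul]
    push_cast
    ring)
  -- the ideal generated by the `a 1 j` maps to the unit ideal in T
  set K : Ideal ↥R := Ideal.span (Set.range (a 1)) with hK
  have hone : (1 : T) ∈ K.map (algebraMap ↥R T) := by
    have h1 : (1 : T) = ∑ j, a 1 j • y j := by simpa using hxy 1
    rw [h1]
    refine Ideal.sum_mem _ (fun j _ => ?_)
    rw [Subring.smul_def, smul_eq_mul]
    exact Ideal.mul_mem_right _ _
      (Ideal.mem_map_of_mem _ (Ideal.subset_span ⟨j, rfl⟩))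
  have hKtop : K = ⊤ := by
    rw [← Ideal.map_eq_top_iff_of_ker_le (algebraMap ↥R T) (hker ▸ bot_le) hint]
    exact (Ideal.eq_top_iff_one _).2 hone
  -- hence 1 is an R-combination of the a 1 j
  have h1K : (1 : ↥R) ∈ K := hKtop ▸ Submodule.mem_top
  rw [hK, Ideal.span, Submodule.mem_span_range_iff_exists_fun] at h1K
  obtain ⟨b, hb⟩ := h1K
  -- each relation gives  r * a 1 j = c' * a 0 j
  have hraj : ∀ j, r * a 1 j = c' * a 0 j := by
    intro j
    have h2 := hrel2 j
    simp only [Matrix.cons_val_zero, Matrix.cons_val_one, Matrix.head_cons] at h2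
    linear_combination -h2
  -- so r = c' * s with s = ∑ b j * a 0 j
  have hrs : r = c' * ∑ j, b j * a 0 j := by
    have hb' : ∑ j, b j * a 1 j = (1 : ↥R) := by simpa [smul_eq_mul] using hb
    calc r = r * ∑ j, b j * a 1 j := by rw [hb', mul_one]
    _ = ∑ j, b j * (r * a 1 j) := by rw [Finset.mul_sum]; exact Finset.sum_congr rfl (fun j _ => by ring)
    _ = ∑ j, b j * (c' * a 0 j) := by simp_rw [hraj]
    _ = c' * ∑ j, b j * a 0 j := by rw [Finset.mul_sum]; exact Finset.sum_congr rfl (fun j _ => by ring)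
  set s : ↥R := ∑ j, b j * a 0 j with hs
  -- cancel c
  have hfin : c * t = c * (s : T) := by
    have h3 := congrArg (Subtype.val : ↥R → T) hrs
    push_cast at h3
    simpa [hr, hc'] using h3
  have h4 : t = (s : T) := (mul_cancel_left_mem_nonZeroDivisors hcreg).1 hfin
  rw [h4]
  exact s.2
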